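/- Let A, B, C ∈ ℝ^{n×n} with A invertible. If σ_max(CA⁻¹B) < 1, then for every F ∈ ℝ^{n×n} the new generalized absolute value matrix equation AX + B|CX| = F has exactly one solution X ∈ ℝ^{n×n}. -/

import Mathlib

open Matrix

/-- Componentwise absolute value of a real matrix. -/
noncomputable def matAbs {n : ℕ} (M : Matrix (Fin n) (Fin n) ℝ) : Matrix (Fin n) (Fin n) ℝ :=
  fun i j => |M i j|

/-- Largest singular value: the square root of the largest eigenvalue of MᵀM. -/
noncomputable def sigmaMax {n : ℕ} (M : Matrix (Fin n) (Fin n) ℝ) : ℝ :=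
  Real.sqrt (sSup (spectrum ℝ (Mᵀ * M)))

lemma sigmaMax_nonneg {n : ℕ} (M : Matrix (Fin n) (Fin n) ℝ) : 0 ≤ sigmaMax M :=
  Real.sqrt_nonneg _


lemma mulVec_sq_le {n : ℕ} (hn : n ≠ 0) (M : Matrix (Fin n) (Fin n) ℝ) (v : Fin n → ℝ) :
    Real.sqrt (∑ i, (M *ᵥ v) i ^ 2) ≤ sigmaMax M * Real.sqrt (∑ i, v i ^ 2) := by
  have hpsd : (Mᵀ * M).PosSemidef := by
    simpa [Matrix.conjTranspose_eq_transpose_of_trivial] using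
      Matrix.posSemidef_conjTranspose_mul_self M
  have hS : (Mᵀ * M).IsHermitian := hpsd.1
  set t := sSup (spectrum ℝ (Mᵀ * M)) with ht
  have hspec : spectrum ℝ (Mᵀ * M) = Set.range hS.eigenvalues :=
    Matrix.IsHermitian.spectrum_real_eq_range_eigenvalues hS
  have hbdd : BddAbove (Set.range hS.eigenvalues) := (Set.finite_range _).bddAbove
  have hle : ∀ i, hS.eigenvalues i ≤ t := by
    intro i
    rw [ht, hspec]
    exact le_csSup hbdd ⟨i, rfl⟩
  have ht0 : 0 ≤ t := le_trans (hpsd.eigenvalues_nonneg ⟨0, Nat.pos_of_ne_zero hn⟩) (hle _)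
  set U : Matrix (Fin n) (Fin n) ℝ := (hS.eigenvectorUnitary : Matrix (Fin n) (Fin n) ℝ) with hUdef
  have hstar : star U = Uᵀ := by
    rw [Matrix.star_eq_conjTranspose, Matrix.conjTranspose_eq_transpose_of_trivial]
  have hUU : U * Uᵀ = 1 := by
    rw [← hstar]
    exact (Matrix.mem_unitaryGroup_iff).mp hS.eigenvectorUnitary.2
  have hww : (Uᵀ *ᵥ v) ⬝ᵥ (Uᵀ *ᵥ v) = v ⬝ᵥ v := by
    nth_rewrite 1 [Matrix.mulVec_transpose]
    rw [← Matrix.dotProduct_mulVec, Matrix.mulVec_mulVec, hUU, Matrix.one_mulVec]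
  have hquad : v ⬝ᵥ ((Mᵀ * M) *ᵥ v) = ∑ i, hS.eigenvalues i * (Uᵀ *ᵥ v) i ^ 2 := by
    conv_lhs => rw [hS.spectral_theorem, Unitary.conjStarAlgAut_apply]
    rw [hstar, ← hUdef, ← Matrix.mulVec_mulVec, ← Matrix.mulVec_mulVec,
      Matrix.dotProduct_mulVec, ← Matrix.mulVec_transpose]
    simp only [dotProduct, Matrix.mulVec_diagonal, Function.comp_apply,
      RCLike.ofReal_real_eq_id, id_eq]
    exact Finset.sum_congr rfl fun i _ => by ring
  have hMvv : v ⬝ᵥ ((Mᵀ * M) *ᵥ v) = (M *ᵥ v) ⬝ᵥ (M *ᵥ v) := by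
    rw [← Matrix.mulVec_mulVec, Matrix.dotProduct_mulVec, Matrix.vecMul_transpose]
  have key : ∑ i, (M *ᵥ v) i ^ 2 ≤ t * ∑ i, v i ^ 2 := by
    have h1 : ∑ i, (M *ᵥ v) i ^ 2 = (M *ᵥ v) ⬝ᵥ (M *ᵥ v) := by
      simp [dotProduct, pow_two]
    have h2 : ∑ i, v i ^ 2 = v ⬝ᵥ v := by simp [dotProduct, pow_two]
    rw [h1, h2, ← hMvv, hquad, ← hww]
    have hstep : ∑ i, hS.eigenvalues i * (Uᵀ *ᵥ v) i ^ 2 ≤ ∑ i, t * (Uᵀ *ᵥ v) i ^ 2 :=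
      Finset.sum_le_sum fun i _ => mul_le_mul_of_nonneg_right (hle i) (sq_nonneg _)
    refine hstep.trans_eq ?_
    rw [← Finset.mul_sum]
    congr 1
    simp [dotProduct, pow_two]
  calc Real.sqrt (∑ i, (M *ᵥ v) i ^ 2) ≤ Real.sqrt (t * ∑ i, v i ^ 2) :=
        Real.sqrt_le_sqrt key
    _ = sigmaMax M * Real.sqrt (∑ i, v i ^ 2) := by
        rw [Real.sqrt_mul ht0, sigmaMax, ← ht]

lemma colfix {n : ℕ} (hn : n ≠ 0) (M : Matrix (Fin n) (Fin n) ℝ) (hσ : sigmaMax M < 1)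
    (g : Fin n → ℝ) : ∃! y : Fin n → ℝ, y = g - M *ᵥ (fun i => |y i|) := by
  classical
  set e := WithLp.equiv 2 (Fin n → ℝ) with he
  set T : EuclideanSpace ℝ (Fin n) → EuclideanSpace ℝ (Fin n) :=
    fun y => e.symm (g - M *ᵥ (fun i => |e y i|)) with hT
  have hnorm : ∀ y : EuclideanSpace ℝ (Fin n), ‖y‖ = Real.sqrt (∑ i, (e y) i ^ 2) := by
    intro y
    rw [EuclideanSpace.norm_eq]
    congr 1
    exact Finset.sum_congr rfl fun i _ => by rw [Real.norm_eq_abs, sq_abs]; rfl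
  set K : NNReal := ⟨sigmaMax M, sigmaMax_nonneg M⟩ with hK
  have hlip : LipschitzWith K T := by
    apply LipschitzWith.of_dist_le_mul
    intro x y
    rw [dist_eq_norm, dist_eq_norm]
    have hsub : T x - T y = e.symm (M *ᵥ (fun i => |e y i| - |e x i|)) := by
      show e.symm (g - M *ᵥ _) - e.symm (g - M *ᵥ _) = _
      rw [← Equiv.symm_apply_apply e (e.symm (g - M *ᵥ fun i => |e x i|) -
        e.symm (g - M *ᵥ fun i => |e y i|))]
      congr 1
      show (g - M *ᵥ _) - (g - M *ᵥ _) = _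
      rw [sub_sub_sub_cancel_left, ← Matrix.mulVec_sub]
      rfl
    rw [hsub, hnorm, hnorm]
    have heq : e (e.symm (M *ᵥ fun i => |e y i| - |e x i|)) =
        M *ᵥ (fun i => |e y i| - |e x i|) := Equiv.apply_symm_apply _ _
    rw [heq]
    refine (mulVec_sq_le hn M _).trans ?_
    show sigmaMax M * _ ≤ (K : ℝ) * _
    rw [hK]
    apply mul_le_mul_of_nonneg_left _ (sigmaMax_nonneg M)
    apply Real.sqrt_le_sqrt
    apply Finset.sum_le_sum
    intro i _
    have h1 : |(|e y i| - |e x i|)| ≤ |e y i - e x i| := abs_abs_sub_abs_le_abs_sub _ _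
    have h2 : e (x - y) i = e x i - e y i := rfl
    rw [h2]
    calc (|e y i| - |e x i|) ^ 2 = |(|e y i| - |e x i|)| ^ 2 := (sq_abs _).symm
      _ ≤ |e y i - e x i| ^ 2 := pow_le_pow_left₀ (abs_nonneg _) h1 2
      _ = (e x i - e y i) ^ 2 := by rw [sq_abs]; ring
  have hKlt : K < 1 := by
    rw [← NNReal.coe_lt_coe]
    exact hσ
  have hC : ContractingWith K T := ⟨hKlt, hlip⟩
  set y₀ := hC.fixedPoint T with hy₀
  have hfix : T y₀ = y₀ := hC.fixedPoint_isFixedPt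
  refine ⟨e y₀, ?_, ?_⟩
  · have := congrArg e hfix
    rw [hT] at this
    simp only [Equiv.apply_symm_apply] at this
    exact this.symm
  · intro z hz
    have hzfix : T (e.symm z) = e.symm z := by
      rw [hT]
      simp only [Equiv.apply_symm_apply]
      exact congrArg e.symm hz.symm
    have : e.symm z = y₀ := hC.fixedPoint_unique hzfix
    rw [← this, Equiv.apply_symm_apply]

/-- If A is invertible and σ_max(CA⁻¹B) < 1, then for every F the NGAVME
AX + B|CX| = F has exactly one solution. -/
theorem ngavme_unique_of_sigmaMax {n : ℕ} (A B C : Matrix (Fin n) (Fin n) ℝ)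
    (hA : IsUnit A) (h : sigmaMax (C * A⁻¹ * B) < 1) :
    ∀ F : Matrix (Fin n) (Fin n) ℝ,
      ∃! X : Matrix (Fin n) (Fin n) ℝ, A * X + B * matAbs (C * X) = F := by
  intro F
  rcases Nat.eq_zero_or_pos n with h0 | hpos
  · subst h0
    exact ⟨0, Subsingleton.elim _ _, fun _ _ => Subsingleton.elim _ _⟩
  have hn : n ≠ 0 := hpos.ne'
  have hdet : IsUnit A.det := (Matrix.isUnit_iff_isUnit_det A).mp hA
  have hAinv : A⁻¹ * A = 1 := Matrix.nonsing_inv_mul A hdet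
  have hAinv' : A * A⁻¹ = 1 := Matrix.mul_nonsing_inv A hdet
  set M := C * A⁻¹ * B with hM
  set G := C * A⁻¹ * F with hG
  have hcol : ∀ j, ∃! y : Fin n → ℝ, y = (fun i => G i j) - M *ᵥ (fun i => |y i|) :=
    fun j => colfix hn M h _
  classical
  set yc : Fin n → Fin n → ℝ := fun j => (hcol j).choose with hyc
  have hycfix : ∀ j, yc j = (fun i => G i j) - M *ᵥ (fun i => |yc j i|) :=
    fun j => (hcol j).choose_spec.1
  have hycuniq : ∀ j (z : Fin n → ℝ), z = (fun i => G i j) - M *ᵥ (fun i => |z i|) → z = yc j :=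
    fun j z hz => (hcol j).choose_spec.2 z hz
  set Y : Matrix (Fin n) (Fin n) ℝ := Matrix.of fun i j => yc j i with hY
  -- matrix fixed point equation
  have hmatfix : ∀ (Z : Matrix (Fin n) (Fin n) ℝ) (j : Fin n),
      (Z = G - M * matAbs Z) ↔ ∀ j, (fun i => Z i j) = (fun i => G i j) - M *ᵥ (fun i => |Z i j|) := by
    intro Z j₀
    constructor
    · intro hZ j
      funext i
      have := congrFun (congrFun hZ i) j
      simpa [Matrix.sub_apply, Matrix.mul_apply, Matrix.mulVec, dotProduct, matAbs]
        using this
    · intro hZ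
      ext i j
      have := congrFun (hZ j) i
      simpa [Matrix.sub_apply, Matrix.mul_apply, Matrix.mulVec, dotProduct, matAbs]
        using this
  have hYfix : Y = G - M * matAbs Y := by
    rw [hmatfix Y ⟨0, hpos⟩]
    intro j
    exact hycfix j
  set X := A⁻¹ * (F - B * matAbs Y) with hX
  have hCX : C * X = Y := by
    rw [hX, ← Matrix.mul_assoc, Matrix.mul_sub, ← Matrix.mul_assoc, ← hG, ← hM]
    exact hYfix.symm
  refine ⟨X, ?_, ?_⟩
  · show A * X + B * matAbs (C * X) = F
    rw [hCX, hX, ← Matrix.mul_assoc, hAinv', Matrix.one_mul, sub_add_cancel]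
  · intro X' hX'0
    have hX' : A * X' + B * matAbs (C * X') = F := hX'0
    set Y' := C * X' with hY'
    have hAX' : A * X' = F - B * matAbs Y' := by
      rw [hY']
      exact eq_sub_of_add_eq hX'
    have hXeq : X' = A⁻¹ * (F - B * matAbs Y') := by
      rw [← hAX', ← Matrix.mul_assoc, hAinv, Matrix.one_mul]
    have hY'fix : Y' = G - M * matAbs Y' := by
      conv_lhs => rw [hY', hXeq]
      rw [← Matrix.mul_assoc, Matrix.mul_sub, ← Matrix.mul_assoc, ← hG, ← hM]
    have hcols : ∀ j, (fun i => Y' i j) = yc j := by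
      intro j
      apply hycuniq
      exact ((hmatfix Y' j).mp hY'fix) j
    have hYY : Y' = Y := by
      ext i j
      exact congrFun (hcols j) i
    rw [hXeq, hYY, ← hX]
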